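/- Let A₁, …, A_{k₀} ∈ GL_n(ℝ) and x₀ ∈ ℤⁿ with Card((Â_{k₀} ∘ ⋯ ∘ Â₁)^{-1}(x₀)) ≥ 1/ε for some ε > 0. Then there exist translation vectors w₁, …, w_{k₀} ∈ [−1/2, 1/2]ⁿ such that Card((π(A_{k₀}+w_{k₀}) ∘ ⋯ ∘ π(A₁+w₁))^{-1}(0)) ≥ 1/ε, where π(A+w) denotes the discretization x ↦ π(Ax + w) of the affine map A + w. -/

import Mathlib

/-- The rounding projection `P : ℝ → ℤ`, with `P t - 1/2 < t ≤ P t + 1/2`. -/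
noncomputable def roundHalf (t : ℝ) : ℤ := ⌈t - 1/2⌉

/-- The discretization `π(A+w)` of the affine map `x ↦ Ax + w`, as a map `ℤⁿ → ℤⁿ`. -/
noncomputable def affDisc {n : ℕ} (A : Matrix (Fin n) (Fin n) ℝ) (w : Fin n → ℝ)
    (x : Fin n → ℤ) : Fin n → ℤ :=
  fun i => roundHalf (A.mulVec (fun j => (x j : ℝ)) i + w i)

/-- The composition `π(A_k+w_k) ∘ ⋯ ∘ π(A₁+w₁)`. -/
noncomputable def affComp {n : ℕ} :
    (k : ℕ) → (Fin k → Matrix (Fin n) (Fin n) ℝ) → (Fin k → Fin n → ℝ) →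
      (Fin n → ℤ) → (Fin n → ℤ)
  | 0, _, _ => id
  | k + 1, A, w => affDisc (A (Fin.last k)) (w (Fin.last k)) ∘
      affComp k (fun i => A i.castSucc) (fun i => w i.castSucc)

lemma roundHalf_sub_int (t : ℝ) (m : ℤ) : roundHalf (t - m) = roundHalf t - m := by
  unfold roundHalf
  rw [show t - (m : ℝ) - 1/2 = t - 1/2 - (m : ℝ) by ring, Int.ceil_sub_intCast]

lemma chain_eq {n k : ℕ} (A : Fin k → Matrix (Fin n) (Fin n) ℝ)
    (v : ℕ → Fin n → ℤ)
    (hv : ∀ i : Fin k, v (i + 1) = affDisc (A i) (fun _ => 0) (v i)) :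
    v k = affComp k A (fun _ _ => 0) (v 0) := by
  induction k with
  | zero => rfl
  | succ k ih =>
    have hres : ∀ i : Fin k, v (i + 1) = affDisc (A i.castSucc) (fun _ => 0) (v i) := by
      intro i
      simpa using hv i.castSucc
    have := ih (fun i => A i.castSucc) hres
    have hk := hv (Fin.last k)
    simp only [Fin.val_last] at hk
    rw [affComp, Function.comp_apply, ← this, hk]

lemma affComp_shift {n k : ℕ} (A : Fin k → Matrix (Fin n) (Fin n) ℝ)
    (v : ℕ → Fin n → ℤ)
    (hv : ∀ i : Fin k, v (i + 1) = affDisc (A i) (fun _ => 0) (v i))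
    (x : Fin n → ℤ) :
    affComp k A (fun i j => (A i).mulVec (fun l => ((v i l : ℝ))) j - (v (i + 1) j : ℝ)) x
      = affComp k A (fun _ _ => 0) (x + v 0) - v k := by
  induction k with
  | zero => simp [affComp]
  | succ k ih =>
    have hres : ∀ i : Fin k, v (i + 1) = affDisc (A i.castSucc) (fun _ => 0) (v i) := by
      intro i; simpa using hv i.castSucc
    have ihk := ih (fun i => A i.castSucc) hres
    rw [affComp, affComp, Function.comp_apply, Function.comp_apply]
    have hw : (fun (i : Fin k) => (fun j =>
        (A i.castSucc).mulVec (fun l => ((v i.castSucc l : ℝ))) j - (v (i.castSucc + 1) j : ℝ)))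
        = (fun (i : Fin k) (j : Fin n) =>
          (A i.castSucc).mulVec (fun l => ((v i l : ℝ))) j - (v (i + 1) j : ℝ)) := by
      funext i j; simp
    rw [hw, ihk]
    set y := affComp k (fun i => A i.castSucc) (fun _ _ => 0) (x + v 0) with hy
    funext i
    simp only [affDisc, Fin.val_last, Pi.sub_apply]
    have hcast : (fun j => ((y j - v k j : ℤ) : ℝ)) =
        (fun l => ((y l : ℝ))) - (fun l => ((v k l : ℝ))) := by
      funext l; simp only [Pi.sub_apply]; push_cast; ring
    rw [hcast, Matrix.mulVec_sub]
    have : (A (Fin.last k)).mulVec (fun l => ((y l : ℝ))) i -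
          (A (Fin.last k)).mulVec (fun l => ((v k l : ℝ))) i +
          ((A (Fin.last k)).mulVec (fun l => ((v k l : ℝ))) i - (v (k + 1) i : ℝ))
        = (A (Fin.last k)).mulVec (fun l => ((y l : ℝ))) i - (v (k + 1) i : ℝ) := by ring
    simp only [Pi.sub_apply]
    rw [this, roundHalf_sub_int]
    simp

noncomputable def vSeq {n k₀ : ℕ} (A : Fin k₀ → Matrix (Fin n) (Fin n) ℝ)
    (v₀ : Fin n → ℤ) : ℕ → Fin n → ℤ
  | 0 => v₀
  | k + 1 => if h : k < k₀ then affDisc (A ⟨k, h⟩) (fun _ => 0) (vSeq A v₀ k)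
             else vSeq A v₀ k

/-- if `Card((Â_{k₀}∘⋯∘Â₁)⁻¹(x₀)) ≥ 1/ε` (the `Â_i` being the
discretizations, i.e. the case `w = 0`), then there exist translation vectors
`w₁,…,w_{k₀} ∈ [−1/2,1/2]ⁿ` with `Card((π(A_{k₀}+w_{k₀})∘⋯∘π(A₁+w₁))⁻¹(0)) ≥ 1/ε`. -/
theorem stmt13 (n k₀ : ℕ) (A : Fin k₀ → Matrix (Fin n) (Fin n) ℝ)
    (hA : ∀ i, IsUnit (A i).det) (x₀ : Fin n → ℤ) (ε : ℝ) (hε : 0 < ε)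
    (hcard : 1 / ε ≤ ((affComp k₀ A (fun _ _ => 0) ⁻¹' {x₀}).ncard : ℝ)) :
    ∃ w : Fin k₀ → Fin n → ℝ,
      (∀ i j, -(1/2 : ℝ) ≤ w i j ∧ w i j ≤ 1/2) ∧
      1 / ε ≤ ((affComp k₀ A w ⁻¹' {(0 : Fin n → ℤ)}).ncard : ℝ) := by
  set S := affComp k₀ A (fun _ _ => 0) ⁻¹' {x₀} with hS
  have hSne : S.Nonempty := by
    rw [Set.nonempty_iff_ne_empty]
    intro h
    rw [h] at hcard
    simp only [Set.ncard_empty, Nat.cast_zero] at hcard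
    have : (0:ℝ) < 1/ε := by positivity
    linarith
  obtain ⟨v₀, hv₀⟩ := hSne
  set v : ℕ → Fin n → ℤ := vSeq A v₀ with hvdef
  have hv : ∀ i : Fin k₀, v (i + 1) = affDisc (A i) (fun _ => 0) (v i) := by
    intro i
    rw [hvdef]
    show (if h : (i:ℕ) < k₀ then affDisc (A ⟨i, h⟩) (fun _ => 0) (vSeq A v₀ i)
          else vSeq A v₀ i) = _
    rw [dif_pos i.isLt, Fin.eta]
  let w : Fin k₀ → Fin n → ℝ :=
    fun i j => (A i).mulVec (fun l => ((v i l : ℤ) : ℝ)) j - ((v (i + 1) j : ℤ) : ℝ)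
  refine ⟨w, ?_, ?_⟩
  · intro i j
    show -(1/2 : ℝ) ≤ (A i).mulVec (fun l => ((v i l : ℤ) : ℝ)) j - ((v (i + 1) j : ℤ) : ℝ) ∧
      (A i).mulVec (fun l => ((v i l : ℤ) : ℝ)) j - ((v (i + 1) j : ℤ) : ℝ) ≤ 1/2
    rw [hv i]
    simp only [affDisc, roundHalf]
    have h1 := Int.ceil_lt_add_one ((A i).mulVec (fun l => ((v (i:ℕ) l : ℤ) : ℝ)) j + 0 - 1/2)
    have h2 := Int.le_ceil ((A i).mulVec (fun l => ((v (i:ℕ) l : ℤ) : ℝ)) j + 0 - 1/2)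
    constructor <;> · push_cast at h1 h2 ⊢; linarith
  · have key := affComp_shift A v hv
    have hvk : v k₀ = x₀ := by
      rw [chain_eq A v hv]
      simpa [hS, show v 0 = v₀ from rfl] using hv₀
    have hweq : w = fun i j => (A i).mulVec (fun l => ((v i l : ℤ) : ℝ)) j - ((v (i + 1) j : ℤ) : ℝ) := rfl
    have hT : affComp k₀ A w ⁻¹' {(0 : Fin n → ℤ)} = (fun x => x + (-v₀)) '' S := by
      ext x
      rw [hweq]
      simp only [Set.mem_preimage, Set.mem_singleton_iff, key x, hvk, Set.mem_image]
      constructor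
      · intro h
        refine ⟨x + v₀, ?_, by abel⟩
        simp only [hS, Set.mem_preimage, Set.mem_singleton_iff]
        have h0 : affComp k₀ A (fun _ _ => 0) (x + v 0) = x₀ := sub_eq_zero.mp h
        exact h0
      · rintro ⟨y, hy, rfl⟩
        simp only [hS, Set.mem_preimage, Set.mem_singleton_iff] at hy
        have hyy : y + -v₀ + v 0 = y := by show y + -v₀ + v₀ = y; abel
        rw [hyy, hy]
        simp
    rw [hT, Set.ncard_image_of_injective S (add_left_injective (-v₀))]
    exact hcard
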